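/- The maps r commute with codegeneracies: for every integer i with 0 ≤ i ≤ N, form the (N+2)-tuple of vector spaces V'_0, …, V'_{N+1} with V'_m = V_m for m < i, V'_i = 0 (the zero vector space), and V'_m = V_{m−1} for m > i, with subsets U'_m given correspondingly (U'_i = {0}), and let c : U'_0 × ⋯ × U'_{N+1} → U_0 × ⋯ × U_N be the canonical bijection omitting the zero slot. Let σ^i : Δ^{N+1} → Δ^N be the map (t_0, …, t_{N+1}) ↦ (t_0, …, t_{i−1}, t_i + t_{i+1}, t_{i+2}, …, t_{N+1}). Then for all t ∈ Δ^{N+1} and u' ∈ U'_0 × ⋯ × U'_{N+1}: (c × c)(r^{N+1}(t, u')) = r^N(σ^i(t), c(u')), where r^{N+1} is formed for the tuple U'_0, …, U'_{N+1}. -/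

import Mathlib

universe u

/-- The map `r^n` of Definition 5.1 of Arone–Ching, for a tuple of real vector spaces:
its first tuple has `j`-th entry `(t_0 + ⋯ + t_j) • u_j` and its second tuple has `j`-th
entry `(t_{j+1} + ⋯ + t_{n-1}) • u_j` (so the last entry is `0`). -/
noncomputable def rmap {n : ℕ} (V : Fin n → ModuleCat.{u} ℝ)
    (t : Fin n → ℝ) (u : ∀ i, ↥(V i)) : (∀ i, ↥(V i)) × (∀ i, ↥(V i)) :=
  (fun k => (∑ m ∈ Finset.univ.filter (fun m => m ≤ k), t m) • u k,
   fun k => (∑ m ∈ Finset.univ.filter (fun m => k < m), t m) • u k)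

/-- The `i`-th codegeneracy map `σ^i : Δ^{N+1} → Δ^N`,
`(t_0, …, t_{N+1}) ↦ (t_0, …, t_{i-1}, t_i + t_{i+1}, t_{i+2}, …, t_{N+1})`,
written on coordinates. -/
def codegen {N : ℕ} (i : ℕ) (t : Fin (N + 2) → ℝ) (k : Fin (N + 1)) : ℝ :=
  if k.val < i then t ⟨k.val, by have := k.isLt; omega⟩
  else if k.val = i then
    t ⟨k.val, by have := k.isLt; omega⟩ + t ⟨k.val + 1, by have := k.isLt; omega⟩
  else t ⟨k.val + 1, by have := k.isLt; omega⟩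

/-- The `(N+2)`-tuple of vector spaces `V'_0, …, V'_{N+1}` obtained from `V_0, …, V_N`
by inserting the zero vector space in slot `i`: `V'_m = V_m` for `m < i`, `V'_i = 0`,
and `V'_m = V_{m-1}` for `m > i`. -/
noncomputable def Vins {N : ℕ} (V : Fin (N + 1) → ModuleCat.{u} ℝ) (i : ℕ) (hi : i ≤ N)
    (m : Fin (N + 2)) : ModuleCat.{u} ℝ :=
  if h : m.val < i then V ⟨m.val, by omega⟩
  else if m.val = i then ModuleCat.of ℝ PUnit
  else V ⟨m.val - 1, by have := m.isLt; omega⟩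

/-- The corresponding subsets `U'_m ⊆ V'_m`, with `U'_i = {0}`. -/
noncomputable def Uins {N : ℕ} (V : Fin (N + 1) → ModuleCat.{u} ℝ)
    (U : ∀ k, Set ↥(V k)) (i : ℕ) (hi : i ≤ N) (m : Fin (N + 2)) :
    Set ↥(Vins V i hi m) := by
  unfold Vins
  split_ifs with h1 h2
  · exact U ⟨m.val, by omega⟩
  · exact ({0} : Set PUnit.{u + 1})
  · exact U ⟨m.val - 1, by have := m.isLt; omega⟩

/-- The canonical bijection `c : V'_0 × ⋯ × V'_{N+1} → V_0 × ⋯ × V_N` omitting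
the zero slot. -/
noncomputable def cins {N : ℕ} (V : Fin (N + 1) → ModuleCat.{u} ℝ) (i : ℕ) (hi : i ≤ N)
    (u' : ∀ m : Fin (N + 2), ↥(Vins V i hi m)) (k : Fin (N + 1)) : ↥(V k) := by
  have hlt := k.isLt
  by_cases h : k.val < i
  · exact cast (congrArg (fun M : ModuleCat.{u} ℝ => ↥M)
      (show Vins V i hi ⟨k.val, by omega⟩ = V k from dif_pos h))
      (u' ⟨k.val, by omega⟩)
  · exact cast (congrArg (fun M : ModuleCat.{u} ℝ => ↥M)
      (show Vins V i hi ⟨k.val + 1, by omega⟩ = V k from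
        (dif_neg (show ¬(k.val + 1 < i) by omega)).trans
          (if_neg (show ¬(k.val + 1 = i) by omega))))
      (u' ⟨k.val + 1, by omega⟩)


section Aux

def Tnat {n : ℕ} (f : Fin n → ℝ) (a : ℕ) : ℝ :=
  if h : a < n then f ⟨a, h⟩ else 0

lemma sum_le_eq_range {n : ℕ} (f : Fin n → ℝ) (k : Fin n) :
    ∑ m ∈ Finset.univ.filter (fun m => m ≤ k), f m
      = ∑ a ∈ Finset.range (k.val + 1), Tnat f a := by
  rw [Finset.sum_filter]
  have h1 : ∀ m : Fin n, (if m ≤ k then f m else 0)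
      = (fun a => if a ≤ k.val then Tnat f a else 0) m.val := by
    intro m
    simp only [Fin.le_def, Tnat, m.isLt, dif_pos, Fin.eta]
  rw [Finset.sum_congr rfl (fun m _ => h1 m),
    Fin.sum_univ_eq_sum_range (fun a => if a ≤ k.val then Tnat f a else 0)]
  rw [← Finset.sum_subset (Finset.range_subset_range.2 (by have := k.isLt; omega : k.val + 1 ≤ n))]
  · exact Finset.sum_congr rfl fun a ha => if_pos (by simp at ha; omega)
  · intro a _ ha
    exact if_neg (by simp at ha; omega)

lemma sum_lt_eq {n : ℕ} (f : Fin n → ℝ) (k : Fin n) :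
    ∑ m ∈ Finset.univ.filter (fun m => k < m), f m
      = (∑ a ∈ Finset.range n, Tnat f a) - ∑ a ∈ Finset.range (k.val + 1), Tnat f a := by
  have := Finset.sum_filter_add_sum_filter_not Finset.univ (fun m => m ≤ k) f
  have h2 : Finset.univ.filter (fun m : Fin n => ¬ m ≤ k)
      = Finset.univ.filter (fun m => k < m) := by
    apply Finset.filter_congr; intro m _; simp [not_le]
  rw [h2] at this
  have h3 : ∑ m : Fin n, f m = ∑ a ∈ Finset.range n, Tnat f a := by
    rw [Finset.sum_congr rfl (fun (m : Fin n) _ =>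
      (by simp [Tnat, m.isLt] : f m = (fun a => Tnat f a) m.val)),
      Fin.sum_univ_eq_sum_range (fun a => Tnat f a)]
  rw [h3] at this
  rw [sum_le_eq_range] at this
  linarith



lemma Tnat_codegen {N : ℕ} (i : ℕ) (t : Fin (N + 2) → ℝ) (a : ℕ) (ha : a < N + 1) :
    Tnat (codegen i t) a =
      if a < i then Tnat t a
      else if a = i then Tnat t a + Tnat t (a + 1)
      else Tnat t (a + 1) := by
  simp only [Tnat, codegen, dif_pos ha, dif_pos (show a < N + 2 by omega),
    dif_pos (show a + 1 < N + 2 by omega)]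

lemma key_sum {N : ℕ} (i : ℕ) (hi : i ≤ N) (t : Fin (N + 2) → ℝ) (j : ℕ) (hj : j ≤ N) :
    ∑ a ∈ Finset.range (j + 1), Tnat (codegen i t) a
      = ∑ a ∈ Finset.range ((if j < i then j else j + 1) + 1), Tnat t a := by
  induction j with
  | zero =>
    rw [Finset.sum_range_one, Tnat_codegen i t 0 (by omega)]
    by_cases h : 0 < i
    · simp [h, Finset.sum_range_one]
    · have h0 : i = 0 := by omega
      simp [h0, Finset.sum_range_succ]
  | succ j ih =>
    rw [Finset.sum_range_succ, ih (by omega), Tnat_codegen i t (j + 1) (by omega)]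
    by_cases h1 : j + 1 < i
    · simp only [if_pos h1, if_pos (show j < i by omega), Finset.sum_range_succ]
    · by_cases h2 : j + 1 = i
      · simp only [if_neg h1, if_pos h2, if_pos (show j < i by omega), if_neg (by omega : ¬ j + 1 < i)]
        simp only [Finset.sum_range_succ]
        ring
      · simp only [if_neg h1, if_neg h2]
        by_cases h3 : j < i
        · omega
        · simp only [if_neg h3, if_neg (by omega : ¬ j + 1 < i), Finset.sum_range_succ]

lemma total_sum {N : ℕ} (i : ℕ) (hi : i ≤ N) (t : Fin (N + 2) → ℝ) :
    ∑ a ∈ Finset.range (N + 1), Tnat (codegen i t) a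
      = ∑ a ∈ Finset.range (N + 2), Tnat t a := by
  have := key_sum i hi t N le_rfl
  rwa [if_neg (by omega : ¬ N < i)] at this

end Aux

/-- cast along an equality of modules commutes with scalar multiplication -/
lemma cast_smul_eq {M M' : ModuleCat.{u} ℝ} (h : M = M') (c : ℝ) (x : ↥M) :
    cast (congrArg (fun M : ModuleCat.{u} ℝ => ↥M) h) (c • x)
      = c • cast (congrArg (fun M : ModuleCat.{u} ℝ => ↥M) h) x := by
  subst h; rfl

/-- index of the slot read by `cins` at position `k` -/
def embk {N : ℕ} (i : ℕ) (k : Fin (N + 1)) : Fin (N + 2) :=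
  if k.val < i then ⟨k.val, by have := k.isLt; omega⟩
  else ⟨k.val + 1, by have := k.isLt; omega⟩

lemma cins_smul {N : ℕ} (V : Fin (N + 1) → ModuleCat.{u} ℝ) (i : ℕ) (hi : i ≤ N)
    (s : Fin (N + 2) → ℝ) (u' : ∀ m : Fin (N + 2), ↥(Vins V i hi m)) (k : Fin (N + 1)) :
    cins V i hi (fun m => s m • u' m) k = s (embk i k) • cins V i hi u' k := by
  unfold cins embk
  by_cases h : k.val < i
  · simp only [dif_pos h, if_pos h]
    apply cast_smul_eq
    · exact dif_pos h
  · simp only [dif_neg h, if_neg h]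
    apply cast_smul_eq
    · exact (dif_neg (show ¬(k.val + 1 < i) by omega)).trans
        (if_neg (show ¬(k.val + 1 = i) by omega))

/-- The maps `r` commute with the `i`-th codegeneracy:
`(c × c)(r^{N+1}(t, u')) = r^N(σ^i(t), c(u'))` for every `t ∈ Δ^{N+1}` and every `u'`
with `u'_m ∈ U'_m`. -/
theorem r_commutes_with_codegeneracy {N : ℕ} (i : ℕ) (hi : i ≤ N)
    (V : Fin (N + 1) → ModuleCat.{u} ℝ)
    [∀ k, TopologicalSpace ↥(V k)] [∀ k, IsTopologicalAddGroup ↥(V k)]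
    [∀ k, ContinuousSMul ℝ ↥(V k)] [∀ k, FiniteDimensional ℝ ↥(V k)]
    (U : ∀ k, Set ↥(V k))
    (hU : ∀ k, ∀ c : ℝ, 0 ≤ c → ∀ v ∈ U k, c • v ∈ U k)
    (t : Fin (N + 2) → ℝ) (ht : t ∈ stdSimplex ℝ (Fin (N + 2)))
    (u' : ∀ m : Fin (N + 2), ↥(Vins V i hi m)) (hu' : ∀ m, u' m ∈ Uins V U i hi m) :
    (cins V i hi ((rmap (Vins V i hi) t u').1),
     cins V i hi ((rmap (Vins V i hi) t u').2)) =
      rmap V (codegen i t) (cins V i hi u') := by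
  have hfst : ∀ k : Fin (N + 1),
      cins V i hi ((rmap (Vins V i hi) t u').1) k
        = (rmap V (codegen i t) (cins V i hi u')).1 k := by
    intro k
    show cins V i hi (fun m => (∑ m' ∈ Finset.univ.filter (fun m' => m' ≤ m), t m') • u' m) k
      = (∑ m ∈ Finset.univ.filter (fun m => m ≤ k), codegen i t m) • cins V i hi u' k
    rw [cins_smul]
    congr 1
    rw [sum_le_eq_range, sum_le_eq_range, key_sum i hi t k.val (by have := k.isLt; omega)]
    congr 1
    unfold embk
    split_ifs with h <;> simp
  have hsnd : ∀ k : Fin (N + 1),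
      cins V i hi ((rmap (Vins V i hi) t u').2) k
        = (rmap V (codegen i t) (cins V i hi u')).2 k := by
    intro k
    show cins V i hi (fun m => (∑ m' ∈ Finset.univ.filter (fun m' => m < m'), t m') • u' m) k
      = (∑ m ∈ Finset.univ.filter (fun m => k < m), codegen i t m) • cins V i hi u' k
    rw [cins_smul]
    congr 1
    rw [sum_lt_eq, sum_lt_eq,
      total_sum i hi t, key_sum i hi t k.val (by have := k.isLt; omega)]
    have hemb : (embk i k).val = if k.val < i then k.val else k.val + 1 := by
      unfold embk; split_ifs <;> rfl
    rw [hemb]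
  exact Prod.ext (funext hfst) (funext hsnd)
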